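/- A permutation π of {1,...,n} avoids both patterns 231 and 213 if and only if every permutation Knuth-equivalent to π avoids 231. Consequently, the number of permutations π such that π and all Knuth-equivalent permutations avoid 231 is 2^{n−1}. -/

import Mathlib

/-- An elementary Knuth transformation on words over ℕ. -/
inductive KnuthStep : List ℕ → List ℕ → Prop
  | k1 (a b : List ℕ) (x y z : ℕ) (h1 : x < y) (h2 : y ≤ z) :
      KnuthStep (a ++ [y, z, x] ++ b) (a ++ [y, x, z] ++ b)
  | k2 (a b : List ℕ) (x y z : ℕ) (h1 : x ≤ y) (h2 : y < z) :
      KnuthStep (a ++ [x, z, y] ++ b) (a ++ [z, x, y] ++ b)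

/-- Knuth equivalence. -/
def KnuthEquiv : List ℕ → List ℕ → Prop := Relation.EqvGen KnuthStep

/-- The one-line word of a permutation of `Fin n`. -/
def wordOf {n : ℕ} (π : Equiv.Perm (Fin n)) : List ℕ :=
  List.ofFn fun i => (π i : ℕ)

/-- `π` contains the pattern 231. -/
def Contains231 {n : ℕ} (π : Equiv.Perm (Fin n)) : Prop :=
  ∃ i j k : Fin n, i < j ∧ j < k ∧ π k < π i ∧ π i < π j

/-- `π` contains the pattern 213. -/
def Contains213 {n : ℕ} (π : Equiv.Perm (Fin n)) : Prop :=
  ∃ i j k : Fin n, i < j ∧ j < k ∧ π j < π i ∧ π i < π k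

def MM : List ℕ → Prop
  | [] => True
  | h :: t => ((∀ x ∈ t, h ≤ x) ∨ (∀ x ∈ t, x ≤ h)) ∧ MM t

def Has231 (w : List ℕ) : Prop :=
  ∃ i j k : ℕ, ∃ _ : i < j, ∃ _ : j < k, ∃ h : k < w.length,
    w[k] < w[i]'(by omega) ∧ w[i]'(by omega) < w[j]'(by omega)

def Has213 (w : List ℕ) : Prop :=
  ∃ i j k : ℕ, ∃ _ : i < j, ∃ _ : j < k, ∃ h : k < w.length,
    w[j]'(by omega) < w[i]'(by omega) ∧ w[i]'(by omega) < w[k]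

lemma ks_perm {w w' : List ℕ} (h : KnuthStep w w') : w.Perm w' := by
  cases h with
  | k1 a b x y z h1 h2 =>
      rw [List.append_assoc, List.append_assoc]
      refine (List.Perm.append_right b ?_).append_left a
      exact .cons y (.swap x z [])
  | k2 a b x y z h1 h2 =>
      rw [List.append_assoc, List.append_assoc]
      refine (List.Perm.append_right b ?_).append_left a
      exact (List.Perm.swap x z [y]).symm

lemma ke_perm {w w' : List ℕ} (h : KnuthEquiv w w') : w.Perm w' := by
  induction h with
  | rel _ _ h => exact ks_perm h
  | refl => exact .refl _
  | symm _ _ _ ih => exact ih.symm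
  | trans _ _ _ _ _ ih1 ih2 => exact ih1.trans ih2

lemma MM_suffix : ∀ (a t : List ℕ), MM (a ++ t) → MM t
  | [], t, h => h
  | _ :: a, t, h => MM_suffix a t h.2

lemma mm_append_congr {u v b : List ℕ} (huv : u.Perm v)
    (hmid : MM (u ++ b) ↔ MM (v ++ b)) :
    ∀ a : List ℕ, MM (a ++ u ++ b) ↔ MM (a ++ v ++ b) := by
  intro a
  induction a with
  | nil => simpa using hmid
  | cons h a ih =>
      simp only [List.cons_append, MM]
      constructor
      · rintro ⟨hc, hm⟩
        refine ⟨?_, ih.mp hm⟩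
        have hmem : ∀ x, x ∈ a ++ v ++ b ↔ x ∈ a ++ u ++ b := by
          intro x; simp only [List.mem_append]
          have := huv.mem_iff (a := x); tauto
        rcases hc with hc | hc
        · exact .inl fun x hx => hc x ((hmem x).mp hx)
        · exact .inr fun x hx => hc x ((hmem x).mp hx)
      · rintro ⟨hc, hm⟩
        refine ⟨?_, ih.mpr hm⟩
        have hmem : ∀ x, x ∈ a ++ u ++ b ↔ x ∈ a ++ v ++ b := by
          intro x; simp only [List.mem_append]
          have := huv.mem_iff (a := x); tauto
        rcases hc with hc | hc
        · exact .inl fun x hx => hc x ((hmem x).mp hx)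
        · exact .inr fun x hx => hc x ((hmem x).mp hx)

lemma mm_k2 {x y z : ℕ} (hxy : x < y) (hyz : y < z) (b : List ℕ) :
    MM (x :: z :: y :: b) ↔ MM (z :: x :: y :: b) := by
  simp only [MM, List.mem_cons]
  constructor
  · rintro ⟨h1, h2, h3⟩
    refine ⟨?_, ?_, h3⟩
    · right
      rintro w (rfl | rfl | hw)
      · omega
      · omega
      · rcases h2 with h2 | h2
        · exact absurd (h2 y (Or.inl rfl)) (by omega)
        · exact h2 w (Or.inr hw)
    · left
      rintro w (rfl | hw)
      · omega
      · rcases h1 with h1 | h1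
        · exact h1 w (Or.inr (Or.inr hw))
        · exact absurd (h1 z (Or.inl rfl)) (by omega)
  · rintro ⟨h1, h2, h3⟩
    refine ⟨?_, ?_, h3⟩
    · left
      rintro w (rfl | rfl | hw)
      · omega
      · omega
      · rcases h2 with h2 | h2
        · exact h2 w (Or.inr hw)
        · exact absurd (h2 y (Or.inl rfl)) (by omega)
    · right
      rintro w (rfl | hw)
      · omega
      · rcases h1 with h1 | h1
        · exact absurd (h1 x (Or.inl rfl)) (by omega)
        · exact h1 w (Or.inr (Or.inr hw))

lemma not_mm_k1a {x y z : ℕ} (hxy : x < y) (hyz : y < z) (b : List ℕ) :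
    ¬ MM (y :: z :: x :: b) := by
  rintro ⟨h, -⟩
  rcases h with h | h
  · exact absurd (h x (by simp)) (by omega)
  · exact absurd (h z (by simp)) (by omega)

lemma not_mm_k1b {x y z : ℕ} (hxy : x < y) (hyz : y < z) (b : List ℕ) :
    ¬ MM (y :: x :: z :: b) := by
  rintro ⟨h, -⟩
  rcases h with h | h
  · exact absurd (h x (by simp)) (by omega)
  · exact absurd (h z (by simp)) (by omega)

lemma ks_mm {w w' : List ℕ} (h : KnuthStep w w') (hnd : w.Nodup) : MM w ↔ MM w' := by
  cases h with
  | k1 a b x y z h1 h2 =>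
      have hyz : y < z := by
        rcases lt_or_eq_of_le h2 with h | h
        · exact h
        · subst h
          exfalso
          have : ¬ (a ++ [y, y, x] ++ b).Nodup := by
            simp [List.nodup_append]
          exact this hnd
      have e1 : a ++ [y, z, x] ++ b = a ++ (y :: z :: x :: b) := by simp
      have e2 : a ++ [y, x, z] ++ b = a ++ (y :: x :: z :: b) := by simp
      rw [e1, e2]
      constructor
      · intro hm; exact absurd (MM_suffix a _ hm) (not_mm_k1a h1 hyz b)
      · intro hm; exact absurd (MM_suffix a _ hm) (not_mm_k1b h1 hyz b)
  | k2 a b x y z h1 h2 =>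
      have hxy : x < y := by
        rcases lt_or_eq_of_le h1 with h | h
        · exact h
        · subst h
          exfalso
          have : ¬ (a ++ [x, z, x] ++ b).Nodup := by
            simp [List.nodup_append]
          exact this hnd
      have := mm_append_congr (u := [x,z,y]) (v := [z,x,y]) (b := b)
        (List.Perm.swap x z [y]).symm (by simpa using mm_k2 hxy h2 b) a
      exact this

lemma ke_mm {w w' : List ℕ} (h : KnuthEquiv w w') (hnd : w.Nodup) : MM w ↔ MM w' := by
  induction h with
  | rel _ _ h => exact ks_mm h hnd
  | refl => exact Iff.rfl
  | symm u v h ih => exact (ih ((ke_perm (.symm _ _ h)).nodup_iff.mp hnd)).symm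
  | trans u v t h1 h2 ih1 ih2 =>
      exact (ih1 hnd).trans (ih2 ((ke_perm h1).nodup_iff.mp hnd))

lemma mm_at {w : List ℕ} (hm : MM w) :
    ∀ i, (hi : i < w.length) →
      (∀ j, i < j → (hj : j < w.length) → w[i] ≤ w[j]) ∨
      (∀ j, i < j → (hj : j < w.length) → w[j] ≤ w[i]) := by
  induction w with
  | nil => intro i hi; simp at hi
  | cons h t ih =>
      intro i hi
      cases i with
      | zero =>
          rcases hm.1 with hc | hc
          · left
            intro j hj hjl
            cases j with
            | zero => omega
            | succ j =>
                simp only [List.getElem_cons_succ, List.getElem_cons_zero]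
                exact hc _ (List.getElem_mem _)
          · right
            intro j hj hjl
            cases j with
            | zero => omega
            | succ j =>
                simp only [List.getElem_cons_succ, List.getElem_cons_zero]
                exact hc _ (List.getElem_mem _)
      | succ i =>
          have hi' : i < t.length := by simpa using hi
          rcases ih hm.2 i hi' with hc | hc
          · left
            intro j hj hjl
            cases j with
            | zero => omega
            | succ j => simpa using hc j (by omega) (by simpa using hjl)
          · right
            intro j hj hjl
            cases j with
            | zero => omega
            | succ j => simpa using hc j (by omega) (by simpa using hjl)

lemma mm_not231 {w : List ℕ} (hm : MM w) : ¬ Has231 w := by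
  rintro ⟨i, j, k, hij, hjk, hk, h1, h2⟩
  rcases mm_at hm i (by omega) with hc | hc
  · exact absurd (hc k (by omega) hk) (by omega)
  · exact absurd (hc j (by omega) (by omega)) (by omega)

lemma mm_not213 {w : List ℕ} (hm : MM w) : ¬ Has213 w := by
  rintro ⟨i, j, k, hij, hjk, hk, h1, h2⟩
  rcases mm_at hm i (by omega) with hc | hc
  · exact absurd (hc j (by omega) (by omega)) (by omega)
  · exact absurd (hc k (by omega) hk) (by omega)

lemma mm_of_not_patterns {w : List ℕ} (h1 : ¬ Has231 w) (h2 : ¬ Has213 w) : MM w := by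
  induction w with
  | nil => trivial
  | cons h t ih =>
      constructor
      · by_contra hc
        push_neg at hc
        obtain ⟨⟨u, hu, hu2⟩, v, hv, hv2⟩ := hc
        obtain ⟨p, hp, hpe⟩ := List.mem_iff_getElem.mp hu
        obtain ⟨q, hq, hqe⟩ := List.mem_iff_getElem.mp hv
        have hpq : p ≠ q := by
          rintro rfl
          have : u = v := by rw [← hpe, ← hqe]
          omega
        rcases Nat.lt_or_ge p q with hlt | hge
        · exact h2 ⟨0, p+1, q+1, by omega, by omega, by simpa using hq, by
            simpa [hpe] using hu2, by simpa [hqe] using hv2⟩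
        · exact h1 ⟨0, q+1, p+1, by omega, by omega, by simpa using hp, by
            simpa [hpe] using hu2, by simpa [hqe] using hv2⟩
      · refine ih ?_ ?_
        · rintro ⟨i, j, k, hij, hjk, hk, ha, hb⟩
          exact h1 ⟨i+1, j+1, k+1, by omega, by omega, by simpa using hk, by
            simpa using ha, by simpa using hb⟩
        · rintro ⟨i, j, k, hij, hjk, hk, ha, hb⟩
          exact h2 ⟨i+1, j+1, k+1, by omega, by omega, by simpa using hk, by
            simpa using ha, by simpa using hb⟩
lemma gm0 (pre post : List ℕ) (p q r : ℕ) {n : ℕ} (hn : n = pre.length)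
    (h : n < (pre ++ [p,q,r] ++ post).length) : (pre ++ [p,q,r] ++ post)[n] = p := by
  subst hn
  simp [List.getElem_append]

lemma gm1 (pre post : List ℕ) (p q r : ℕ) {n : ℕ} (hn : n = pre.length + 1)
    (h : n < (pre ++ [p,q,r] ++ post).length) : (pre ++ [p,q,r] ++ post)[n] = q := by
  subst hn
  rw [List.getElem_eq_iff, List.getElem?_append_left (by simp),
    List.getElem?_append_right (by omega)]
  simp

lemma gm2 (pre post : List ℕ) (p q r : ℕ) {n : ℕ} (hn : n = pre.length + 2)
    (h : n < (pre ++ [p,q,r] ++ post).length) : (pre ++ [p,q,r] ++ post)[n] = r := by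
  subst hn
  rw [List.getElem_eq_iff, List.getElem?_append_left (by simp),
    List.getElem?_append_right (by omega)]
  simp

lemma gmhi (pre post : List ℕ) (p q r : ℕ) {n : ℕ} (hn : pre.length + 3 ≤ n)
    (h : n < (pre ++ [p,q,r] ++ post).length)
    (hp : n - pre.length - 3 < post.length) :
    (pre ++ [p,q,r] ++ post)[n] = post[n - pre.length - 3] := by
  rw [List.getElem_eq_iff, List.getElem?_append_right (by simp; omega)]
  have e : n - (pre ++ [p,q,r]).length = n - pre.length - 3 := by simp; omega
  rw [e, List.getElem?_eq_getElem hp]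

lemma decomp3 (w : List ℕ) (i : ℕ) (h : i + 2 < w.length) :
    w = w.take i ++ [w[i]'(by omega), w[i+1]'(by omega), w[i+2]] ++ w.drop (i+3) := by
  conv_lhs => rw [← List.take_append_drop i w]
  rw [List.drop_eq_getElem_cons (show i < w.length by omega)]
  rw [List.drop_eq_getElem_cons (show i+1 < w.length by omega)]
  rw [List.drop_eq_getElem_cons (show i+2 < w.length by omega)]
  simp

lemma len3' : True := trivial

lemma len3 (pre post : List ℕ) (p q r : ℕ) :
    (pre ++ [p,q,r] ++ post).length = pre.length + 3 + post.length := by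
  simp; omega

set_option maxHeartbeats 8000000 in
lemma exists231 : ∀ (d : ℕ) (w : List ℕ), w.Nodup →
    ∀ i j k : ℕ, ∀ (hij : i < j) (hjk : j < k) (hd : k - i ≤ d) (hk : k < w.length),
    w[j]'(by omega) < w[i]'(by omega) → w[i]'(by omega) < w[k] →
    ∃ w', KnuthEquiv w w' ∧ Has231 w' := by
  intro d
  induction d with
  | zero => intro w _ i j k hij hjk hd; exact absurd hd (by omega)
  | succ d ih =>
    intro w hnd i j k hij hjk hd hk hba hac
    by_cases hk2 : k = i + 2
    · have hj : j = i + 1 := by omega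
      subst hj; subst hk2
      obtain ⟨pre, post, a', b', c', hdec, hlpre⟩ :
          ∃ pre post a' b' c', w = pre ++ [a', b', c'] ++ post ∧ pre.length = i :=
        ⟨w.take i, w.drop (i+3), _, _, _, decomp3 w i (by omega), by simp; omega⟩
      subst hdec
      rw [gm1 pre post a' b' c' (n := i+1) (by omega), gm0 pre post a' b' c' (n := i) (by omega)] at hba
      rw [gm0 pre post a' b' c' (n := i) (by omega), gm2 pre post a' b' c' (n := i+2) (by omega)] at hac
      refine ⟨pre ++ [a', c', b'] ++ post, ?_, ?_⟩
      · exact Relation.EqvGen.symm _ _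
          (Relation.EqvGen.rel _ _ (KnuthStep.k1 pre post b' a' c' hba hac.le))
      · refine ⟨pre.length, pre.length+1, pre.length+2, by omega, by omega,
          by rw [len3]; omega, ?_, ?_⟩
        · rw [gm2 pre post a' c' b' rfl, gm0 pre post a' c' b' rfl]; exact hba
        · rw [gm0 pre post a' c' b' rfl, gm1 pre post a' c' b' rfl]; exact hac
    · have hk3 : i + 2 < k := by omega
      by_cases hp : ∃ p, ∃ _ : i < p, ∃ hpk : p < k, w[i]'(by omega) < w[p]'(by omega)
      · obtain ⟨p, hip, hpk, hvp⟩ := hp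
        rcases lt_trichotomy p j with hpj | hpj | hpj
        · exact ⟨w, Relation.EqvGen.refl w, ⟨i, p, j, hip, hpj, by omega, hba, hvp⟩⟩
        · exfalso; subst hpj; omega
        · exact ih w hnd i j p hij hpj (by omega) (by omega) hba hvp
      · push_neg at hp
        have hps : ∀ p, (h1 : i < p) → (h2 : p < k) → w[p]'(by omega) < w[i]'(by omega) := by
          intro p h1 h2
          rcases lt_or_eq_of_le (hp p h1 h2) with h | h
          · exact h
          · exfalso; have := (List.Nodup.getElem_inj_iff hnd).mp h; omega
        have hs := hps (i+1) (by omega) (by omega)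
        have ht := hps (i+2) (by omega) (by omega)
        by_cases hst : w[i+2]'(by omega) < w[i+1]'(by omega)
        · exact ih w hnd (i+1) (i+2) k (by omega) (by omega) (by omega) hk hst (hs.trans hac)
        · have hst' : w[i+1]'(by omega) ≤ w[i+2]'(by omega) := not_lt.mp hst
          obtain ⟨pre, post, a', s', t', hdec, hlpre⟩ :
              ∃ pre post a' s' t', w = pre ++ [a', s', t'] ++ post ∧ pre.length = i :=
            ⟨w.take i, w.drop (i+3), _, _, _, decomp3 w i (by omega), by simp; omega⟩
          clear hp hps hst hba
          subst hdec
          rw [gm1 pre post a' s' t' (n := i+1) (by omega), gm0 pre post a' s' t' (n := i) (by omega)] at hs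
          simp only [gm2 pre post a' s' t' (n := i+2) (by omega), gm0 pre post a' s' t' (n := i) (by omega)] at ht
          rw [gm1 pre post a' s' t' (n := i+1) (by omega), gm2 pre post a' s' t' (n := i+2) (by omega)] at hst'
          have hkpost : k - pre.length - 3 < post.length := by
            have h2 := hk; rw [len3] at h2; omega
          rw [gm0 pre post a' s' t' (n := i) (by omega),
            gmhi pre post a' s' t' (n := k) (by omega) hk hkpost] at hac
          have step : KnuthStep (pre ++ [s', a', t'] ++ post) (pre ++ [a', s', t'] ++ post) :=
            KnuthStep.k2 pre post s' t' a' hst' ht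
          have hequiv : KnuthEquiv (pre ++ [a', s', t'] ++ post) (pre ++ [s', a', t'] ++ post) :=
            Relation.EqvGen.symm _ _ (Relation.EqvGen.rel _ _ step)
          have hnd' : (pre ++ [s', a', t'] ++ post).Nodup := ((ks_perm step).nodup_iff).mpr hnd
          have hk' : k < (pre ++ [s', a', t'] ++ post).length := by
            rw [len3]; rw [len3] at hk; exact hk
          obtain ⟨w'', h1, h2⟩ := ih (pre ++ [s', a', t'] ++ post) hnd' (i+1) (i+2) k
            (by omega) (by omega) (by omega) hk'
            (by rw [gm2 pre post s' a' t' (n := i+2) (by omega), gm1 pre post s' a' t' (n := i+1) (by omega)]; exact ht)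
            (by rw [gm1 pre post s' a' t' (n := i+1) (by omega),
                gmhi pre post s' a' t' (n := k) (by omega) hk' hkpost]; exact hac)
          exact ⟨w'', Relation.EqvGen.trans _ _ _ hequiv h1, h2⟩

lemma length_wordOf {n : ℕ} (π : Equiv.Perm (Fin n)) : (wordOf π).length = n := by
  simp [wordOf]

lemma getElem_wordOf {n : ℕ} (π : Equiv.Perm (Fin n)) (i : ℕ) (h : i < (wordOf π).length) :
    (wordOf π)[i] = (π ⟨i, by simpa [wordOf] using h⟩ : Fin n) := by
  simp [wordOf]

lemma nodup_wordOf {n : ℕ} (π : Equiv.Perm (Fin n)) : (wordOf π).Nodup := by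
  rw [wordOf, List.nodup_ofFn]
  exact Fin.val_injective.comp π.injective

lemma mem_wordOf {n : ℕ} (π : Equiv.Perm (Fin n)) (x : ℕ) : x ∈ wordOf π ↔ x < n := by
  simp only [wordOf, List.mem_ofFn]
  constructor
  · rintro ⟨i, rfl⟩; exact (π i).isLt
  · intro hx; exact ⟨π⁻¹ ⟨x, hx⟩, by simp⟩

lemma contains231_iff {n : ℕ} (π : Equiv.Perm (Fin n)) :
    Contains231 π ↔ Has231 (wordOf π) := by
  constructor
  · rintro ⟨i, j, k, hij, hjk, h1, h2⟩
    refine ⟨i, j, k, hij, hjk, by simp [length_wordOf], ?_, ?_⟩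
    · rw [getElem_wordOf, getElem_wordOf]
      simpa using h1
    · rw [getElem_wordOf, getElem_wordOf]
      simpa using h2
  · rintro ⟨i, j, k, hij, hjk, hk, h1, h2⟩
    rw [length_wordOf] at hk
    refine ⟨⟨i, by omega⟩, ⟨j, by omega⟩, ⟨k, by omega⟩, hij, hjk, ?_, ?_⟩
    · rw [getElem_wordOf, getElem_wordOf] at h1
      exact h1
    · rw [getElem_wordOf, getElem_wordOf] at h2
      exact h2

lemma contains213_iff {n : ℕ} (π : Equiv.Perm (Fin n)) :
    Contains213 π ↔ Has213 (wordOf π) := by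
  constructor
  · rintro ⟨i, j, k, hij, hjk, h1, h2⟩
    refine ⟨i, j, k, hij, hjk, by simp [length_wordOf], ?_, ?_⟩
    · rw [getElem_wordOf, getElem_wordOf]
      simpa using h1
    · rw [getElem_wordOf, getElem_wordOf]
      simpa using h2
  · rintro ⟨i, j, k, hij, hjk, hk, h1, h2⟩
    rw [length_wordOf] at hk
    refine ⟨⟨i, by omega⟩, ⟨j, by omega⟩, ⟨k, by omega⟩, hij, hjk, ?_, ?_⟩
    · rw [getElem_wordOf, getElem_wordOf] at h1
      exact h1
    · rw [getElem_wordOf, getElem_wordOf] at h2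
      exact h2

noncomputable def permOfList {n : ℕ} (w : List ℕ) (h1 : w.length = n) (hnd : w.Nodup)
    (hlt : ∀ x ∈ w, x < n) : Equiv.Perm (Fin n) :=
  Equiv.ofBijective
    (fun i => ⟨w[(i : ℕ)]'(h1 ▸ i.isLt), hlt _ (List.getElem_mem _)⟩)
    (Finite.injective_iff_bijective.mp (fun a b hab => by
      apply Fin.ext
      exact (hnd.getElem_inj_iff).mp (congrArg Fin.val hab)))

lemma wordOf_permOfList {n : ℕ} (w : List ℕ) (h1 : w.length = n) (hnd : w.Nodup)
    (hlt : ∀ x ∈ w, x < n) : wordOf (permOfList w h1 hnd hlt) = w := by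
  apply List.ext_getElem (by simp [length_wordOf, h1])
  intro i hi hi2
  rw [getElem_wordOf]
  simp [permOfList]

lemma wordOf_inj {n : ℕ} (π σ : Equiv.Perm (Fin n)) (h : wordOf π = wordOf σ) : π = σ := by
  apply Equiv.ext
  intro i
  have hi : (i : ℕ) < (wordOf π).length := by rw [length_wordOf]; exact i.isLt
  have := List.getElem_of_eq h hi
  rw [getElem_wordOf, getElem_wordOf] at this
  apply Fin.ext
  simpa using this

lemma key {n : ℕ} (π : Equiv.Perm (Fin n)) :
    (∀ σ : Equiv.Perm (Fin n), KnuthEquiv (wordOf π) (wordOf σ) → ¬ Contains231 σ) ↔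
      MM (wordOf π) := by
  constructor
  · intro hσ
    by_contra hmm
    have hpat : Has231 (wordOf π) ∨ Has213 (wordOf π) := by
      by_contra hc
      push_neg at hc
      exact hmm (mm_of_not_patterns hc.1 hc.2)
    have hex : ∃ w', KnuthEquiv (wordOf π) w' ∧ Has231 w' := by
      rcases hpat with h | h
      · exact ⟨wordOf π, Relation.EqvGen.refl _, h⟩
      · obtain ⟨i, j, k, hij, hjk, hk, h1, h2⟩ := h
        exact exists231 (k - i) (wordOf π) (nodup_wordOf π) i j k hij hjk le_rfl hk h1 h2
    obtain ⟨w', hke, h231⟩ := hex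
    have hperm : (wordOf π).Perm w' := ke_perm hke
    have hlen : w'.length = n := by rw [← hperm.length_eq, length_wordOf]
    have hnd' : w'.Nodup := hperm.nodup_iff.mp (nodup_wordOf π)
    have hlt : ∀ x ∈ w', x < n := fun x hx => (mem_wordOf π x).mp (hperm.mem_iff.mpr hx)
    have := hσ (permOfList w' hlen hnd' hlt)
    rw [wordOf_permOfList] at this
    exact this hke ((contains231_iff _).mpr (by rwa [wordOf_permOfList]))
  · intro hmm σ hke
    rw [contains231_iff]
    exact mm_not231 ((ke_mm hke (nodup_wordOf π)).mp hmm)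

def G : List Bool → ℕ → List ℕ
  | [], _ => []
  | true :: bs, lo => lo :: G bs (lo + 1)
  | false :: bs, lo => (lo + bs.length) :: G bs lo

lemma G_length : ∀ (bs : List Bool) (lo : ℕ), (G bs lo).length = bs.length
  | [], _ => rfl
  | true :: bs, lo => by simp [G, G_length bs]
  | false :: bs, lo => by simp [G, G_length bs]

lemma G_perm : ∀ (bs : List Bool) (lo : ℕ), (G bs lo).Perm (List.range' lo bs.length)
  | [], _ => by simp [G]
  | true :: bs, lo => by
      rw [show (true :: bs).length = bs.length + 1 by simp, List.range'_succ]
      exact (G_perm bs (lo+1)).cons lo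
  | false :: bs, lo => by
      rw [show (false :: bs).length = bs.length + 1 by simp]
      rw [show List.range' lo (bs.length + 1) = List.range' lo bs.length ++ [lo + bs.length] by
        simpa using List.range'_concat (step := 1) (s := lo) (n := bs.length)]
      refine List.Perm.trans ?_ (List.perm_append_singleton _ _).symm
      exact ((G_perm bs lo).cons _)

lemma G_mem {bs : List Bool} {lo x : ℕ} (h : x ∈ G bs lo) : lo ≤ x ∧ x < lo + bs.length := by
  have := (G_perm bs lo).mem_iff.mp h
  exact List.mem_range'_1.mp this

lemma MM_G : ∀ (bs : List Bool) (lo : ℕ), MM (G bs lo)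
  | [], _ => trivial
  | true :: bs, lo => by
      refine ⟨Or.inl fun x hx => ?_, MM_G bs (lo+1)⟩
      have := (G_mem hx).1; omega
  | false :: bs, lo => by
      refine ⟨Or.inr fun x hx => ?_, MM_G bs lo⟩
      have := (G_mem hx).2; omega

lemma G_last_irrel : ∀ (bs : List Bool) (b b' : Bool) (lo : ℕ),
    G (bs ++ [b]) lo = G (bs ++ [b']) lo
  | [], b, b', lo => by cases b <;> cases b' <;> simp [G]
  | true :: bs, b, b', lo => by simp [G, G_last_irrel bs b b']
  | false :: bs, b, b', lo => by simp [G, G_last_irrel bs b b']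

lemma G_inj : ∀ (bs bs' : List Bool) (lo : ℕ), bs.length = bs'.length →
    G (bs ++ [true]) lo = G (bs' ++ [true]) lo → bs = bs'
  | [], [], _, _, _ => rfl
  | [], y :: bs', lo, hl, _ => by simp at hl
  | x :: bs, [], lo, hl, _ => by simp at hl
  | x :: bs, y :: bs', lo, hl, he => by
      cases x <;> cases y <;> simp only [List.cons_append, G] at he
      · simp only [List.cons.injEq] at he
        rw [G_inj bs bs' lo (by simpa using hl) he.2]
      · exfalso
        have := List.head_eq_of_cons_eq he
        simp at this
      · exfalso
        have := List.head_eq_of_cons_eq he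
        simp at this
      · simp only [List.cons.injEq] at he
        rw [G_inj bs bs' (lo+1) (by simpa using hl) he.2]

lemma G_surj : ∀ (k : ℕ) (lo : ℕ) (w : List ℕ), w.Perm (List.range' lo k) → MM w →
    ∃ bs : List Bool, bs.length = k ∧ G bs lo = w := by
  intro k
  induction k with
  | zero =>
      intro lo w hp _
      have hw : w = [] := List.Perm.eq_nil (by simpa using hp)
      exact ⟨[], rfl, by simp [G, hw]⟩
  | succ k ih =>
      intro lo w hp hmm
      obtain ⟨h, t, rfl⟩ : ∃ h t, w = h :: t := by
        cases w with
        | nil => exfalso; have := hp.length_eq; simp at this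
        | cons h t => exact ⟨h, t, rfl⟩
      have hhmem : lo ≤ h ∧ h < lo + (k+1) :=
        List.mem_range'_1.mp (hp.mem_iff.mp (List.mem_cons_self (a := h) (l := t)))
      rcases hmm.1 with hc | hc
      · -- h is the minimum, h = lo
        have hlo : h = lo := by
          have hlomem : lo ∈ h :: t := hp.mem_iff.mpr (by
            apply List.mem_range'_1.mpr; omega)
          rcases List.mem_cons.mp hlomem with h' | h'
          · omega
          · have := hc lo h'; omega
        subst hlo
        have ht : t.Perm (List.range' (h+1) k) := by
          have := hp; rw [List.range'_succ] at this
          exact this.cons_inv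
        obtain ⟨bs, hbl, hbg⟩ := ih (h+1) t ht hmm.2
        exact ⟨true :: bs, by simp [hbl], by simp [G, hbg]⟩
      · -- h is the maximum, h = lo + k
        have hhi : h = lo + k := by
          have hmem : lo + k ∈ h :: t := hp.mem_iff.mpr (by
            apply List.mem_range'_1.mpr; omega)
          rcases List.mem_cons.mp hmem with h' | h'
          · omega
          · have := hc _ h'; omega
        subst hhi
        have ht : t.Perm (List.range' lo k) := by
          have h2 := hp
          rw [show List.range' lo (k+1) = List.range' lo k ++ [lo + k] by
            simpa using List.range'_concat (step := 1) (s := lo) (n := k)] at h2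
          exact (h2.trans (List.perm_append_singleton _ _)).cons_inv
        obtain ⟨bs, hbl, hbg⟩ := ih lo t ht hmm.2
        exact ⟨false :: bs, by simp [hbl], by simp [G, hbl, hbg]⟩

lemma wordOf_perm_range {n : ℕ} (π : Equiv.Perm (Fin n)) :
    (wordOf π).Perm (List.range n) := by
  rw [List.perm_ext_iff_of_nodup (nodup_wordOf π) (List.nodup_range (n := n))]
  intro x
  simp [mem_wordOf, List.mem_range]

noncomputable def Phi (n : ℕ) (b : Fin (n-1) → Bool) (hn : 1 ≤ n) : Equiv.Perm (Fin n) :=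
  permOfList (G (List.ofFn b ++ [true]) 0)
    (by rw [G_length]; simp; omega)
    (((G_perm _ _).nodup_iff).mpr List.nodup_range')
    (fun x hx => by
      have := (G_mem hx).2
      simp at this
      omega)

lemma wordOf_Phi (n : ℕ) (b : Fin (n-1) → Bool) (hn : 1 ≤ n) :
    wordOf (Phi n b hn) = G (List.ofFn b ++ [true]) 0 :=
  wordOf_permOfList _ _ _ _


/-- A permutation avoids 231 and 213 iff every Knuth-equivalent permutation avoids 231;
the number of permutations whose whole Knuth class avoids 231 is `2^(n-1)`. -/
theorem stmt_9 (n : ℕ) (hn : 1 ≤ n) :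
    (∀ π : Equiv.Perm (Fin n),
      (¬ Contains231 π ∧ ¬ Contains213 π) ↔
        ∀ σ : Equiv.Perm (Fin n), KnuthEquiv (wordOf π) (wordOf σ) → ¬ Contains231 σ) ∧
    {π : Equiv.Perm (Fin n) |
        ∀ σ : Equiv.Perm (Fin n), KnuthEquiv (wordOf π) (wordOf σ) → ¬ Contains231 σ}.ncard =
      2 ^ (n - 1) := by
  constructor
  · intro π
    rw [contains231_iff, contains213_iff]
    constructor
    · rintro ⟨h1, h2⟩
      exact (key π).mpr (mm_of_not_patterns h1 h2)
    · intro h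
      have := (key π).mp h
      exact ⟨mm_not231 this, mm_not213 this⟩
  · have hset : {π : Equiv.Perm (Fin n) |
        ∀ σ : Equiv.Perm (Fin n), KnuthEquiv (wordOf π) (wordOf σ) → ¬ Contains231 σ}
        = {π : Equiv.Perm (Fin n) | MM (wordOf π)} := by
      ext π
      simp only [Set.mem_setOf_eq]
      exact key π
    rw [hset, ← Nat.card_coe_set_eq]
    have hbij : Function.Bijective
        (fun b : Fin (n-1) → Bool =>
          (⟨Phi n b hn, by
            simp only [Set.mem_setOf_eq]
            rw [wordOf_Phi]
            exact MM_G _ _⟩ :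
            {π : Equiv.Perm (Fin n) | MM (wordOf π)})) := by
      constructor
      · intro b b' hbb
        have h1 : Phi n b hn = Phi n b' hn := congrArg Subtype.val hbb
        have h2 : G (List.ofFn b ++ [true]) 0 = G (List.ofFn b' ++ [true]) 0 := by
          rw [← wordOf_Phi n b hn, ← wordOf_Phi n b' hn, h1]
        have h3 := G_inj (List.ofFn b) (List.ofFn b') 0 (by simp) h2
        exact List.ofFn_inj.mp h3
      · rintro ⟨π, hπ⟩
        simp only [Set.mem_setOf_eq] at hπ
        have hperm : (wordOf π).Perm (List.range' 0 n) := by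
          have := wordOf_perm_range π
          rwa [List.range_eq_range'] at this
        obtain ⟨bs, hbl, hbg⟩ := G_surj n 0 (wordOf π) hperm hπ
        have hne : bs ≠ [] := by intro h; rw [h] at hbl; simp at hbl; omega
        have hdl : bs.dropLast.length = n - 1 := by rw [List.length_dropLast, hbl]
        refine ⟨fun i => bs.dropLast[(i : ℕ)]'(by rw [hdl]; exact i.isLt), ?_⟩
        apply Subtype.ext
        simp only
        apply wordOf_inj
        rw [wordOf_Phi]
        have hofn : List.ofFn (fun i : Fin (n-1) =>
            bs.dropLast[(i : ℕ)]'(by rw [hdl]; exact i.isLt)) = bs.dropLast := by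
          apply List.ext_getElem (by simp [hdl])
          intro i h1 h2
          simp
        rw [hofn, G_last_irrel bs.dropLast true (bs.getLast hne) 0,
          List.dropLast_append_getLast hne, hbg]
    rw [← Nat.card_eq_of_bijective _ hbij]
    simp [Nat.card_eq_fintype_card]
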